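/- arXiv:2509.25425 — 2 statements merged into one kernel-verified Lean document; each statement's English description precedes it below -/
import Mathlib

section
/- For every n ≥ 1, C_n · B_n + s·P_n = t · J_{t·4^n}. -/
open Matrix Kronecker

def Jmat (m l : ℕ) : Matrix (Fin m) (Fin l) ℤ := Matrix.of fun _ _ => 1
def Kmat (m : ℕ) : Matrix (Fin m) (Fin m) ℤ :=
  Matrix.of fun i j => if (j : ℕ) = m - 1 - (i : ℕ) then 1 else 0
def kron {m n p q : ℕ} (A : Matrix (Fin m) (Fin n) ℤ) (B : Matrix (Fin p) (Fin q) ℤ) :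
    Matrix (Fin (m * p)) (Fin (n * q)) ℤ :=
  Matrix.reindex finProdFinEquiv finProdFinEquiv (A ⊗ₖ B)
def castM {m n m' n' : ℕ} (hm : m = m') (hn : n = n') (A : Matrix (Fin m) (Fin n) ℤ) :
    Matrix (Fin m') (Fin n') ℤ :=
  Matrix.reindex (finCongr hm) (finCongr hn) A
def alphaM {m l : ℕ} (s : ℕ) (X : Matrix (Fin m) (Fin l) ℤ) :
    Matrix (Fin (m / s)) (Fin l) ℤ :=
  Matrix.of fun i j => X (Fin.castLE (Nat.div_le_self m s) i) j
def vstack {m₁ m₂ l : ℕ} (X : Matrix (Fin m₁) (Fin l) ℤ) (Y : Matrix (Fin m₂) (Fin l) ℤ) :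
    Matrix (Fin (m₁ + m₂)) (Fin l) ℤ :=
  Matrix.reindex finSumFinEquiv (Equiv.refl _) (Matrix.fromRows X Y)
def hstack {m l₁ l₂ : ℕ} (X : Matrix (Fin m) (Fin l₁) ℤ) (Y : Matrix (Fin m) (Fin l₂) ℤ) :
    Matrix (Fin m) (Fin (l₁ + l₂)) ℤ :=
  Matrix.reindex (Equiv.refl _) finSumFinEquiv (Matrix.fromCols X Y)
def block2 {a b c d : ℕ} (A : Matrix (Fin a) (Fin c) ℤ) (B : Matrix (Fin a) (Fin d) ℤ)
    (C : Matrix (Fin b) (Fin c) ℤ) (D : Matrix (Fin b) (Fin d) ℤ) :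
    Matrix (Fin (a + b)) (Fin (c + d)) ℤ :=
  Matrix.reindex finSumFinEquiv finSumFinEquiv (Matrix.fromBlocks A B C D)
lemma four_pow_eq (n : ℕ) : (4 : ℕ) ^ n = 2 ^ n * 2 ^ n := by
  rw [show (4 : ℕ) = 2 * 2 from rfl, mul_pow]
lemma t_four_pow_div (t n : ℕ) : t * 4 ^ n / 2 ^ n = t * 2 ^ n := by
  rw [four_pow_eq, ← mul_assoc, Nat.mul_div_cancel _ (by positivity)]
def vnum (v t n : ℕ) : ℕ := (v + (2 ^ (n + 1) - 4) * t) * 2 ^ (n - 1)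
lemma vnum_one (v t : ℕ) : vnum v t 1 = v := by norm_num [vnum]
lemma vnum_succ (v t n : ℕ) :
    vnum v t (n + 2) = 2 * vnum v t (n + 1) + 2 * (t * 4 ^ (n + 1)) := by
  unfold vnum
  simp only [show n + 2 + 1 = n + 3 from rfl, show n + 2 - 1 = n + 1 from rfl,
    show n + 1 + 1 = n + 2 from rfl, show n + 1 - 1 = n from rfl]
  have h2 : (4 : ℕ) ≤ 2 ^ (n + 2) := by
    calc (4 : ℕ) = 2 ^ 2 := rfl
    _ ≤ 2 ^ (n + 2) := Nat.pow_le_pow_right (by norm_num) (by omega)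
  have h3 : (4 : ℕ) ≤ 2 ^ (n + 3) := le_trans h2 (Nat.pow_le_pow_right (by norm_num) (by omega))
  rw [four_pow_eq]
  zify [h2, h3]
  ring
def Pmat (t n : ℕ) : Matrix (Fin (t * 4 ^ n)) (Fin (t * 4 ^ n)) ℤ :=
  castM (by rw [four_pow_eq]; ring) (by rw [four_pow_eq]; ring)
    (kron (kron (Jmat (2 ^ n) 1) (Kmat (2 ^ n))) (Jmat t (t * 2 ^ n)))
def Pone (t : ℕ) : Matrix (Fin (4 * t)) (Fin (4 * t)) ℤ :=
  castM (by ring) (by ring) (kron (kron (Jmat 2 1) (Kmat 2)) (Jmat t (2 * t)))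

/-- The recursively defined sequence `P'_n` of Lemma 2. -/
def P'mat (t : ℕ) : (n : ℕ) → Matrix (Fin (t * 4 ^ n)) (Fin (t * 4 ^ n)) ℤ
  | 0 => 0
  | 1 => castM (by ring) (by ring) (kron (kron (Jmat 2 1) (Kmat 2)) (Jmat t (2 * t)))
  | (n + 2) =>
      castM
        (by rw [t_four_pow_div, four_pow_eq]; ring)
        (by ring)
        (kron (kron (kron (Jmat (2 ^ (n + 2)) 1) (Kmat 2))
          (alphaM (2 ^ (n + 1)) (P'mat t (n + 1)))) (Jmat 1 2))

/-- The recursively defined sequence `B_n` (with `B_1` given). -/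
def Bmat (t v : ℕ) (B₁ : Matrix (Fin v) (Fin (4 * t)) ℤ) :
    (n : ℕ) → Matrix (Fin (vnum v t n)) (Fin (t * 4 ^ n)) ℤ
  | 0 => 0
  | 1 => castM (vnum_one v t).symm (by ring) B₁
  | (n + 2) =>
      castM (by rw [vnum_succ]; try ring) (by ring)
        (vstack (kron (kron (Kmat 2) (Bmat t v B₁ (n + 1))) (Jmat 1 2))
          (kron (kron (1 : Matrix (Fin 2) (Fin 2) ℤ) (Pmat t (n + 1))) (Jmat 1 2)))

/-- The recursively defined sequence `C_n` (with `C_1` given). -/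
def Cmat (t v : ℕ) (C₁ : Matrix (Fin (4 * t)) (Fin v) ℤ) :
    (n : ℕ) → Matrix (Fin (t * 4 ^ n)) (Fin (vnum v t n)) ℤ
  | 0 => 0
  | 1 => castM (by ring) (vnum_one v t).symm C₁
  | (n + 2) =>
      castM (by rw [t_four_pow_div, four_pow_eq]; ring) (by rw [vnum_succ]; try ring)
        (hstack
          (kron (kron (Jmat (2 ^ (n + 2)) 1) (1 : Matrix (Fin 2) (Fin 2) ℤ))
            (alphaM (2 ^ (n + 1)) (Cmat t v C₁ (n + 1))))
          (kron (kron (Jmat (2 ^ (n + 2)) 1) (1 : Matrix (Fin 2) (Fin 2) ℤ))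
            (alphaM (2 ^ (n + 1)) (Pmat t (n + 1)))))

/-- The recursively defined sequence `A_n` (with `A_1`, `B_1`, `C_1` given). -/
def Amat (t v : ℕ) (A₁ : Matrix (Fin v) (Fin v) ℤ) (B₁ : Matrix (Fin v) (Fin (4 * t)) ℤ)
    (C₁ : Matrix (Fin (4 * t)) (Fin v) ℤ) :
    (n : ℕ) → Matrix (Fin (vnum v t n)) (Fin (vnum v t n)) ℤ
  | 0 => 0
  | 1 => castM (vnum_one v t).symm (vnum_one v t).symm A₁
  | (n + 2) =>
      castM (by rw [vnum_succ]) (by rw [vnum_succ])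
        (block2 (kron (1 : Matrix (Fin 2) (Fin 2) ℤ) (Amat t v A₁ B₁ C₁ (n + 1)))
          (kron (1 : Matrix (Fin 2) (Fin 2) ℤ) (Bmat t v B₁ (n + 1)))
          (kron (Kmat 2) (Cmat t v C₁ (n + 1)))
          (kron (Kmat 2) (Pmat t (n + 1))))


lemma ent_congr {a b : ℕ} (X : Matrix (Fin a) (Fin b) ℤ) {i i' : Fin a} {j j' : Fin b}
    (hi : (i : ℕ) = (i' : ℕ)) (hj : (j : ℕ) = (j' : ℕ)) : X i j = X i' j' := by
  congr 1 <;> exact Fin.ext ‹_›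

lemma castM_apply {m n m' n' : ℕ} (hm : m = m') (hn : n = n')
    (A : Matrix (Fin m) (Fin n) ℤ) (i : Fin m') (j : Fin n') :
    castM hm hn A i j = A ⟨(i : ℕ), hm ▸ i.isLt⟩ ⟨(j : ℕ), hn ▸ j.isLt⟩ := by
  subst hm; subst hn; rfl

lemma kron_apply {m n p q : ℕ} (A : Matrix (Fin m) (Fin n) ℤ) (B : Matrix (Fin p) (Fin q) ℤ)
    (i : Fin (m * p)) (j : Fin (n * q)) :
    kron A B i j = A i.divNat j.divNat * B i.modNat j.modNat := rfl

lemma vstack_apply {m₁ m₂ l : ℕ} (X : Matrix (Fin m₁) (Fin l) ℤ) (Y : Matrix (Fin m₂) (Fin l) ℤ)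
    (i : Fin (m₁ + m₂)) (j : Fin l) :
    vstack X Y i j = if h : (i : ℕ) < m₁ then X ⟨i, h⟩ j
      else Y ⟨(i : ℕ) - m₁, by omega⟩ j := by
  unfold vstack
  rw [Matrix.reindex_apply]
  by_cases h : (i : ℕ) < m₁
  · rw [dif_pos h]
    have : finSumFinEquiv.symm i = Sum.inl ⟨i, h⟩ := by
      apply finSumFinEquiv.injective; simp [Fin.ext_iff]
    simp [this]
  · rw [dif_neg h]
    have : finSumFinEquiv.symm i = Sum.inr ⟨(i : ℕ) - m₁, by omega⟩ := by
      apply finSumFinEquiv.injective; simp [Fin.ext_iff]; omega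
    simp [this]

lemma hstack_apply {m l₁ l₂ : ℕ} (X : Matrix (Fin m) (Fin l₁) ℤ) (Y : Matrix (Fin m) (Fin l₂) ℤ)
    (i : Fin m) (j : Fin (l₁ + l₂)) :
    hstack X Y i j = if h : (j : ℕ) < l₁ then X i ⟨j, h⟩
      else Y i ⟨(j : ℕ) - l₁, by omega⟩ := by
  unfold hstack
  rw [Matrix.reindex_apply]
  by_cases h : (j : ℕ) < l₁
  · rw [dif_pos h]
    have : finSumFinEquiv.symm j = Sum.inl ⟨j, h⟩ := by
      apply finSumFinEquiv.injective; simp [Fin.ext_iff]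
    simp [this]
  · rw [dif_neg h]
    have : finSumFinEquiv.symm j = Sum.inr ⟨(j : ℕ) - l₁, by omega⟩ := by
      apply finSumFinEquiv.injective; simp [Fin.ext_iff]; omega
    simp [this]

lemma alphaM_apply {m l : ℕ} (s : ℕ) (X : Matrix (Fin m) (Fin l) ℤ)
    (i : Fin (m / s)) (j : Fin l) :
    alphaM s X i j = X ⟨(i : ℕ), lt_of_lt_of_le i.isLt (Nat.div_le_self m s)⟩ j := rfl

/-- entry formula for `Pmat`. -/
lemma Pmat_apply (t n : ℕ) (i j : Fin (t * 4 ^ n)) :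
    Pmat t n i j =
      if ((j : ℕ) / (t * 2 ^ n)) % 2 ^ n = 2 ^ n - 1 - ((i : ℕ) / t % 2 ^ n) then 1 else 0 := by
  unfold Pmat
  rw [castM_apply, kron_apply, kron_apply]
  simp only [Jmat, Kmat, Matrix.of_apply, one_mul, mul_one]
  simp
  exact if_congr Iff.rfl rfl rfl


lemma sum_P_P (t k : ℕ) (ht : 0 < t) (x y : Fin (t * 4 ^ k)) :
    ∑ u : Fin (t * 4 ^ k), Pmat t k x u * Pmat t k u y = (t : ℤ) := by
  have hM : 0 < 2 ^ k := Nat.pow_pos (by norm_num)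
  have hcast : 2 ^ k * 2 ^ k * t = t * 4 ^ k := by rw [four_pow_eq]; ring
  set M := 2 ^ k with hMdef
  let e : (Fin M × Fin M) × Fin t ≃ Fin (t * 4 ^ k) :=
    (finProdFinEquiv.prodCongr (Equiv.refl (Fin t))).trans (finProdFinEquiv.trans (finCongr hcast))
  rw [← Equiv.sum_comp e (fun u => Pmat t k x u * Pmat t k u y)]
  rw [Fintype.sum_prod_type, Fintype.sum_prod_type]
  set A := M - 1 - ((x : ℕ) / t % M) with hAdef
  set Y := ((y : ℕ) / (t * M)) % M with hYdef
  have key : ∀ (a b : Fin M) (w : Fin t),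
      Pmat t k x (e ((a, b), w)) * Pmat t k (e ((a, b), w)) y =
      (if (a : ℕ) = A then (1 : ℤ) else 0) * (if Y = M - 1 - (b : ℕ) then (1 : ℤ) else 0) := by
    intro a b w
    have hval : ((e ((a, b), w) : Fin (t * 4 ^ k)) : ℕ) = (w : ℕ) + t * ((b : ℕ) + M * (a : ℕ)) := by
      simp [e, finProdFinEquiv]
    rw [Pmat_apply, Pmat_apply, hval]
    have h1 : ((w : ℕ) + t * ((b : ℕ) + M * (a : ℕ))) / t = (b : ℕ) + M * (a : ℕ) := by
      rw [Nat.add_mul_div_left _ _ ht, Nat.div_eq_of_lt w.isLt, Nat.zero_add]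
    have h2 : ((w : ℕ) + t * ((b : ℕ) + M * (a : ℕ))) / (t * M) = (a : ℕ) := by
      rw [← Nat.div_div_eq_div_mul, h1, Nat.add_mul_div_left _ _ hM,
        Nat.div_eq_of_lt b.isLt, Nat.zero_add]
    have h3 : ((b : ℕ) + M * (a : ℕ)) % M = (b : ℕ) := by
      rw [Nat.add_mul_mod_self_left, Nat.mod_eq_of_lt b.isLt]
    rw [h1, h2, h3, Nat.mod_eq_of_lt a.isLt]
  simp only [key]
  simp only [Finset.sum_const, Finset.card_univ, Fintype.card_fin, nsmul_eq_mul]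
  have sum_a : (∑ a : Fin M, (if (a : ℕ) = A then (1 : ℤ) else 0)) = 1 := by
    have hA : A < M := by omega
    rw [Finset.sum_eq_single_of_mem ⟨A, hA⟩ (Finset.mem_univ _)]
    · simp
    · intro b _ hb
      rw [if_neg]
      exact fun h => hb (Fin.ext h)
  have sum_b : (∑ b : Fin M, (if Y = M - 1 - (b : ℕ) then (1 : ℤ) else 0)) = 1 := by
    have hY : Y < M := Nat.mod_lt _ hM
    rw [Finset.sum_eq_single_of_mem ⟨M - 1 - Y, by omega⟩ (Finset.mem_univ _)]
    · simp only [Fin.val_mk]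
      rw [if_pos (by omega)]
    · intro b _ hb
      rw [if_neg]
      intro h
      exact hb (Fin.ext (by simp only [Fin.val_mk]; omega))
  calc ∑ a : Fin M, ∑ b : Fin M,
        (t : ℤ) * ((if (a : ℕ) = A then (1 : ℤ) else 0) * (if Y = M - 1 - (b : ℕ) then (1 : ℤ) else 0))
      = (t : ℤ) * ((∑ a : Fin M, (if (a : ℕ) = A then (1 : ℤ) else 0)) *
          (∑ b : Fin M, (if Y = M - 1 - (b : ℕ) then (1 : ℤ) else 0))) := by
        rw [Finset.sum_mul_sum]
        rw [Finset.mul_sum]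
        apply Finset.sum_congr rfl
        intro a _
        rw [Finset.mul_sum]
    _ = (t : ℤ) := by rw [sum_a, sum_b]; ring


lemma vnum_pos {v : ℕ} (hv : 0 < v) (t n : ℕ) : 0 < vnum v t n := by
  unfold vnum
  have : 0 < v + (2 ^ (n + 1) - 4) * t := by omega
  positivity

lemma Bmat_succ_apply (t v : ℕ) (ht : 0 < t) (hv : 0 < v) (B₁ : Matrix (Fin v) (Fin (4 * t)) ℤ)
    (m : ℕ) (y : Fin (vnum v t (m + 2))) (c : Fin (t * 4 ^ (m + 2))) :
    Bmat t v B₁ (m + 2) y c =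
      if h : (y : ℕ) < 2 * vnum v t (m + 1) then
        (if ((c : ℕ) / 2) / (t * 4 ^ (m + 1)) = 1 - (y : ℕ) / vnum v t (m + 1) then 1 else 0) *
          Bmat t v B₁ (m + 1) ⟨(y : ℕ) % vnum v t (m + 1), Nat.mod_lt _ (vnum_pos hv t (m + 1))⟩
            ⟨((c : ℕ) / 2) % (t * 4 ^ (m + 1)), Nat.mod_lt _ (by positivity)⟩
      else
        (if ((y : ℕ) - 2 * vnum v t (m + 1)) / (t * 4 ^ (m + 1)) = ((c : ℕ) / 2) / (t * 4 ^ (m + 1))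
            then 1 else 0) *
          Pmat t (m + 1) ⟨((y : ℕ) - 2 * vnum v t (m + 1)) % (t * 4 ^ (m + 1)), Nat.mod_lt _ (by positivity)⟩
            ⟨((c : ℕ) / 2) % (t * 4 ^ (m + 1)), Nat.mod_lt _ (by positivity)⟩ := by
  simp only [Bmat]
  rw [castM_apply, vstack_apply]
  by_cases h : (y : ℕ) < 2 * vnum v t (m + 1)
  · rw [dif_pos (by simpa using h), dif_pos h]
    rw [kron_apply, kron_apply]
    simp only [Jmat, Kmat, Matrix.of_apply, Fin.coe_divNat, Fin.coe_modNat, Fin.val_mk,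
      Nat.div_one, mul_one]
    refine congrArg₂ (· * ·) (if_congr (by norm_num) rfl rfl) (ent_congr _ ?_ ?_)
    · simp [Fin.coe_modNat, Fin.coe_divNat]
    · simp [Fin.coe_modNat, Fin.coe_divNat]
  · rw [dif_neg (by simpa using h), dif_neg h]
    rw [kron_apply, kron_apply]
    simp only [Jmat, Matrix.of_apply, Fin.coe_divNat, Fin.coe_modNat, Fin.val_mk,
      Nat.div_one, mul_one, Matrix.one_apply, Fin.ext_iff]
    refine congrArg₂ (· * ·) rfl (ent_congr _ ?_ ?_)
    · simp [Fin.coe_modNat, Fin.coe_divNat]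
    · simp [Fin.coe_modNat, Fin.coe_divNat]


lemma QleN (t m : ℕ) : t * 2 ^ m ≤ t * 4 ^ m :=
  Nat.mul_le_mul_left t (Nat.pow_le_pow_left (by norm_num) m)

lemma Cmat_succ_apply (t v : ℕ) (ht : 0 < t) (hv : 0 < v) (C₁ : Matrix (Fin (4 * t)) (Fin v) ℤ)
    (m : ℕ) (r : Fin (t * 4 ^ (m + 2))) (y : Fin (vnum v t (m + 2))) :
    Cmat t v C₁ (m + 2) r y =
      if h : (y : ℕ) < 2 * vnum v t (m + 1) then
        (if ((r : ℕ) / (t * 2 ^ (m + 1))) % 2 = ((y : ℕ) / vnum v t (m + 1)) % 2 then 1 else 0) *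
          Cmat t v C₁ (m + 1)
            ⟨(r : ℕ) % (t * 2 ^ (m + 1)), lt_of_lt_of_le (Nat.mod_lt _ (by positivity)) (QleN t (m + 1))⟩
            ⟨(y : ℕ) % vnum v t (m + 1), Nat.mod_lt _ (vnum_pos hv t (m + 1))⟩
      else
        (if ((r : ℕ) / (t * 2 ^ (m + 1))) % 2 = (((y : ℕ) - 2 * vnum v t (m + 1)) / (t * 4 ^ (m + 1))) % 2
            then 1 else 0) *
          Pmat t (m + 1)
            ⟨(r : ℕ) % (t * 2 ^ (m + 1)), lt_of_lt_of_le (Nat.mod_lt _ (by positivity)) (QleN t (m + 1))⟩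
            ⟨((y : ℕ) - 2 * vnum v t (m + 1)) % (t * 4 ^ (m + 1)), Nat.mod_lt _ (by positivity)⟩ := by
  simp only [Cmat]
  rw [castM_apply, hstack_apply]
  by_cases h : (y : ℕ) < 2 * vnum v t (m + 1)
  · rw [dif_pos (by simpa using h), dif_pos h]
    rw [kron_apply, kron_apply, alphaM_apply]
    simp only [Jmat, Matrix.of_apply, Fin.coe_divNat, Fin.coe_modNat, Fin.val_mk,
      one_mul, Matrix.one_apply, Fin.ext_iff]
    refine congrArg₂ (· * ·) (if_congr ?_ rfl rfl) (ent_congr _ ?_ ?_)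
    · simp [Fin.coe_modNat, Fin.coe_divNat, t_four_pow_div]
    · simp [Fin.coe_modNat, Fin.coe_divNat, t_four_pow_div]
    · simp [Fin.coe_modNat, Fin.coe_divNat]
  · rw [dif_neg (by simpa using h), dif_neg h]
    rw [kron_apply, kron_apply, alphaM_apply]
    simp only [Jmat, Matrix.of_apply, Fin.coe_divNat, Fin.coe_modNat, Fin.val_mk,
      one_mul, Matrix.one_apply, Fin.ext_iff]
    refine congrArg₂ (· * ·) (if_congr ?_ rfl rfl) (ent_congr _ ?_ ?_)
    · simp [Fin.coe_modNat, Fin.coe_divNat, t_four_pow_div]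
    · simp [Fin.coe_modNat, Fin.coe_divNat, t_four_pow_div]
    · simp [Fin.coe_modNat, Fin.coe_divNat]


lemma pent_succ_iff (t m r c : ℕ) (ht : 0 < t)
    (hr : r < t * 4 ^ (m + 2)) (hc : c < t * 4 ^ (m + 2)) :
    ((c / (t * 2 ^ (m + 2))) % 2 ^ (m + 2) = 2 ^ (m + 2) - 1 - (r / t % 2 ^ (m + 2)))
    ↔ ((c / 2) / (t * 4 ^ (m + 1)) = 1 - (r / (t * 2 ^ (m + 1))) % 2
        ∧ ((c / 2) % (t * 4 ^ (m + 1)) / (t * 2 ^ (m + 1))) % 2 ^ (m + 1)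
            = 2 ^ (m + 1) - 1 - ((r % (t * 2 ^ (m + 1))) / t % 2 ^ (m + 1))) := by
  set M := 2 ^ (m + 1) with hMdef
  have hM : 0 < M := Nat.pow_pos (by norm_num)
  have h2M : 2 ^ (m + 2) = M * 2 := pow_succ 2 (m + 1)
  have hN : t * 4 ^ (m + 1) = t * M * M := by rw [four_pow_eq]; ring
  have h4 : t * 4 ^ (m + 2) = 2 * (t * M * (M * 2)) := by
    rw [show (4 : ℕ) ^ (m + 2) = 4 ^ (m + 1) * 4 from pow_succ 4 (m + 1), four_pow_eq]; ring
  -- c side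
  have hA : c / (t * 2 ^ (m + 2)) = (c / 2) / (t * M) := by
    rw [h2M, show t * (M * 2) = 2 * (t * M) by ring, ← Nat.div_div_eq_div_mul]
  set A := (c / 2) / (t * M) with hAdef
  have hc' : c / 2 < t * M * (M * 2) := Nat.div_lt_of_lt_mul (by omega)
  have hAlt : A < M * 2 := Nat.div_lt_of_lt_mul hc'
  have hAmod : A % 2 ^ (m + 2) = A := by rw [h2M]; exact Nat.mod_eq_of_lt hAlt
  set γ := A / M with hγdef
  set β := A % M with hβdef
  have hγβ : M * γ + β = A := Nat.div_add_mod A M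
  have hγlt : γ < 2 := Nat.div_lt_of_lt_mul hAlt
  have hβlt : β < M := Nat.mod_lt _ hM
  have hγeq : (c / 2) / (t * 4 ^ (m + 1)) = γ := by
    rw [hγdef, hAdef]
    conv_rhs => rw [Nat.div_div_eq_div_mul]
    rw [hN]
  have hβeq : ((c / 2) % (t * 4 ^ (m + 1)) / (t * M)) % M = β := by
    rw [hN, Nat.mod_mul_right_div_self, hβdef, hAdef, Nat.mod_mod_of_dvd _ dvd_rfl]
  -- r side
  set ρ := (r / t) % (M * 2) with hρdef
  have hρlt : ρ < M * 2 := Nat.mod_lt _ (by omega)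
  set ρ₁ := ρ / M with hρ₁def
  set ρ₀ := ρ % M with hρ₀def
  have hρeq : M * ρ₁ + ρ₀ = ρ := Nat.div_add_mod ρ M
  have hρ₁lt : ρ₁ < 2 := Nat.div_lt_of_lt_mul hρlt
  have hρ₀lt : ρ₀ < M := Nat.mod_lt _ hM
  have hρ₁eq : (r / (t * M)) % 2 = ρ₁ := by
    rw [hρ₁def, hρdef, Nat.mod_mul_right_div_self, ← Nat.div_div_eq_div_mul]
  have hρ₀eq : (r % (t * M)) / t % M = ρ₀ := by
    rw [Nat.mod_mul_right_div_self, Nat.mod_mod_of_dvd _ dvd_rfl, hρ₀def, hρdef,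
      Nat.mod_mod_of_dvd _ ⟨2, rfl⟩]
  rw [hA, hAmod, hγeq, hβeq, hρ₁eq, hρ₀eq, h2M, ← hρdef]
  clear_value ρ₀ ρ₁ ρ β γ A
  clear hγeq hβeq hρ₁eq hρ₀eq hA hAmod hρdef hγdef hβdef hρ₁def hρ₀def hAdef hr hc h4 hN hc'
  have hγ01 : γ = 0 ∨ γ = 1 := by omega
  have hρ₁01 : ρ₁ = 0 ∨ ρ₁ = 1 := by omega
  rcases hγ01 with rfl | rfl <;> rcases hρ₁01 with rfl | rfl <;> omega

lemma Pone_apply (t : ℕ) (i j : Fin (4 * t)) :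
    Pone t i j = if ((j : ℕ) / (2 * t)) % 2 = 1 - ((i : ℕ) / t) % 2 then 1 else 0 := by
  unfold Pone
  rw [castM_apply, kron_apply, kron_apply]
  simp [Jmat, Kmat, Fin.coe_divNat, Fin.coe_modNat]
  exact if_congr Iff.rfl rfl rfl


/-- Equation (17): `C_n · B_n + s·P_n = t · J_{t·4^n}`. -/
theorem Cmat_mul_Bmat
    (t lam v k : ℕ) (ht : 0 < t) (hv : 0 < v) (hk : 0 < k)
    (s : ℤ) (hs : s = (t : ℤ) - (lam : ℤ)) (hspos : 0 < s)
    (A₁ : Matrix (Fin v) (Fin v) ℤ)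
    (B₁ : Matrix (Fin v) (Fin (4 * t)) ℤ) (C₁ : Matrix (Fin (4 * t)) (Fin v) ℤ)
    (hA01 : ∀ i j, A₁ i j = 0 ∨ A₁ i j = 1)
    (hB01 : ∀ i j, B₁ i j = 0 ∨ B₁ i j = 1) (hC01 : ∀ i j, C₁ i j = 0 ∨ C₁ i j = 1)
    (hA1 : A₁ * A₁ + s • A₁ = (t : ℤ) • Jmat v v)
    (hA1J : A₁ * Jmat v v = (k : ℤ) • Jmat v v)
    (hJA1 : Jmat v v * A₁ = (k : ℤ) • Jmat v v)
    (hB1C1 : B₁ * C₁ = (t : ℤ) • Jmat v v)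
    (hB1P1 : B₁ * Pone t = (t : ℤ) • Jmat v (4 * t))
    (hP1C1 : Pone t * C₁ = (t : ℤ) • Jmat (4 * t) v)
    (hA1B1 : A₁ * B₁ + s • B₁ = (t : ℤ) • Jmat v (4 * t))
    (hC1A1 : C₁ * A₁ + s • C₁ = (t : ℤ) • Jmat (4 * t) v)
    (hC1B1 : C₁ * B₁ + s • Pone t = (t : ℤ) • Jmat (4 * t) (4 * t))
    (hBJ : B₁ * Jmat (4 * t) (4 * t) = (2 * (t : ℤ)) • Jmat v (4 * t))
    (hJB : Jmat v v * B₁ = (k : ℤ) • Jmat v (4 * t))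
    (hCJ : C₁ * Jmat v v = (k : ℤ) • Jmat (4 * t) v)
    (hJC : Jmat (4 * t) (4 * t) * C₁ = (2 * (t : ℤ)) • Jmat (4 * t) v)
    (hblockB : ∀ i : Fin v, ∃! b : Fin 2, ∀ j : Fin (4 * t),
      B₁ i j = if (j : ℕ) / (2 * t) = (b : ℕ) then 1 else 0)
    (hblockC : ∀ j : Fin v, ∀ b : Fin 2,
      (Finset.univ.filter fun i : Fin (4 * t) =>
        (i : ℕ) / (2 * t) = (b : ℕ) ∧ C₁ i j = 1).card = t)
    (n : ℕ) (hn : 1 ≤ n) :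
    Cmat t v C₁ n * Bmat t v B₁ n + s • Pmat t n =
      (t : ℤ) • Jmat (t * 4 ^ n) (t * 4 ^ n) := by
  clear hA01 hB01 hC01 hA1 hA1J hJA1 hB1C1 hB1P1 hP1C1 hA1B1 hC1A1 hBJ hJB hCJ hJC
  clear hblockB hblockC hs hspos hk A₁ lam k
  induction n, hn using Nat.le_induction with
  | base =>
    ext r c
    simp only [Matrix.add_apply, Matrix.mul_apply, Matrix.smul_apply, smul_eq_mul, Jmat,
      Matrix.of_apply, mul_one]
    have h41 : t * 4 ^ 1 = 4 * t := by norm_num [mul_comm]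
    have hr4 : (r : ℕ) < 4 * t := h41 ▸ r.isLt
    have hc4 : (c : ℕ) < 4 * t := h41 ▸ c.isLt
    rw [← Equiv.sum_comp (finCongr (vnum_one v t).symm)
      (fun z => Cmat t v C₁ 1 r z * Bmat t v B₁ 1 z c)]
    have hkey : ∀ w : Fin v,
        Cmat t v C₁ 1 r (finCongr (vnum_one v t).symm w) *
          Bmat t v B₁ 1 (finCongr (vnum_one v t).symm w) c
        = C₁ ⟨(r : ℕ), hr4⟩ w * B₁ w ⟨(c : ℕ), hc4⟩ := by
      intro w
      simp only [Cmat, Bmat, castM_apply]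
      refine congrArg₂ (· * ·) (ent_congr _ rfl ?_) (ent_congr _ ?_ rfl) <;>
        simp [finCongr_apply, Fin.coe_cast]
    rw [Finset.sum_congr rfl (fun w _ => hkey w)]
    have hCB := congrFun (congrFun hC1B1 ⟨(r : ℕ), hr4⟩) ⟨(c : ℕ), hc4⟩
    simp only [Matrix.add_apply, Matrix.mul_apply, Matrix.smul_apply, smul_eq_mul, Jmat,
      Matrix.of_apply, mul_one] at hCB
    have hPP : Pone t ⟨(r : ℕ), hr4⟩ ⟨(c : ℕ), hc4⟩ = Pmat t 1 r c := by
      rw [Pone_apply, Pmat_apply]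
      simp [pow_one, Nat.mul_comm]
    rw [← hPP]
    linarith [hCB]
  | succ n hn ih =>
    obtain ⟨m, rfl⟩ : ∃ m, n = m + 1 := ⟨n - 1, by omega⟩
    show Cmat t v C₁ (m + 2) * Bmat t v B₁ (m + 2) + s • Pmat t (m + 2)
        = (t : ℤ) • Jmat (t * 4 ^ (m + 2)) (t * 4 ^ (m + 2))
    have hVpos : 0 < vnum v t (m + 1) := vnum_pos hv t (m + 1)
    have hNpos : 0 < t * 4 ^ (m + 1) := by positivity
    have ihe : ∀ (i j : Fin (t * 4 ^ (m + 1))),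
        ∑ u : Fin (vnum v t (m + 1)), Cmat t v C₁ (m + 1) i u * Bmat t v B₁ (m + 1) u j
          = (t : ℤ) - s * Pmat t (m + 1) i j := by
      intro i j
      have h2 := congrFun (congrFun ih i) j
      simp only [Matrix.add_apply, Matrix.mul_apply, Matrix.smul_apply, smul_eq_mul, Jmat,
        Matrix.of_apply, mul_one] at h2
      linarith [h2]
    ext r c
    simp only [Matrix.add_apply, Matrix.mul_apply, Matrix.smul_apply, smul_eq_mul, Jmat,
      Matrix.of_apply, mul_one]
    have pfr : (r : ℕ) % (t * 2 ^ (m + 1)) < t * 4 ^ (m + 1) :=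
      lt_of_lt_of_le (Nat.mod_lt _ (by positivity)) (QleN t (m + 1))
    have pfc : ((c : ℕ) / 2) % (t * 4 ^ (m + 1)) < t * 4 ^ (m + 1) := Nat.mod_lt _ hNpos
    rw [← Equiv.sum_comp (finCongr (vnum_succ v t m).symm)
      (fun z => Cmat t v C₁ (m + 2) r z * Bmat t v B₁ (m + 2) z c), Fin.sum_univ_add]
    have chunk1 : ∀ (a : Fin 2) (u : Fin (vnum v t (m + 1))),
        Cmat t v C₁ (m + 2) r (finCongr (vnum_succ v t m).symm
            (Fin.castAdd (2 * (t * 4 ^ (m + 1))) (finProdFinEquiv (a, u)))) *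
          Bmat t v B₁ (m + 2) (finCongr (vnum_succ v t m).symm
            (Fin.castAdd (2 * (t * 4 ^ (m + 1))) (finProdFinEquiv (a, u)))) c
        = ((if ((r : ℕ) / (t * 2 ^ (m + 1))) % 2 = (a : ℕ) then (1 : ℤ) else 0) *
            (if ((c : ℕ) / 2) / (t * 4 ^ (m + 1)) = 1 - (a : ℕ) then (1 : ℤ) else 0)) *
          (Cmat t v C₁ (m + 1) ⟨(r : ℕ) % (t * 2 ^ (m + 1)), pfr⟩ u *
            Bmat t v B₁ (m + 1) u ⟨((c : ℕ) / 2) % (t * 4 ^ (m + 1)), pfc⟩) := by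
      intro a u
      have hZ : ((finCongr (vnum_succ v t m).symm
          (Fin.castAdd (2 * (t * 4 ^ (m + 1))) (finProdFinEquiv (a, u))) :
            Fin (vnum v t (m + 2))) : ℕ) = (u : ℕ) + vnum v t (m + 1) * (a : ℕ) := by
        simp [finProdFinEquiv]
      rw [Cmat_succ_apply t v ht hv C₁ m r _, Bmat_succ_apply t v ht hv B₁ m _ c]
      have hlt : (u : ℕ) + vnum v t (m + 1) * (a : ℕ) < 2 * vnum v t (m + 1) := by
        have ha := a.isLt
        have hu := u.isLt
        have hb : vnum v t (m + 1) * (a : ℕ) ≤ vnum v t (m + 1) * 1 :=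
          Nat.mul_le_mul_left _ (by omega)
        omega
      rw [dif_pos (show _ < 2 * vnum v t (m + 1) by rw [hZ]; exact hlt),
        dif_pos (show _ < 2 * vnum v t (m + 1) by rw [hZ]; exact hlt)]
      simp only [hZ]
      have h1 : ((u : ℕ) + vnum v t (m + 1) * (a : ℕ)) / vnum v t (m + 1) = (a : ℕ) := by
        rw [Nat.add_mul_div_left _ _ hVpos, Nat.div_eq_of_lt u.isLt, Nat.zero_add]
      have h2 : ((u : ℕ) + vnum v t (m + 1) * (a : ℕ)) % vnum v t (m + 1) = (u : ℕ) := by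
        rw [Nat.add_mul_mod_self_left, Nat.mod_eq_of_lt u.isLt]
      have h3 : (a : ℕ) % 2 = (a : ℕ) := Nat.mod_eq_of_lt a.isLt
      simp only [h1, h2, h3, Fin.eta]
      ring
    have chunk2 : ∀ (a : Fin 2) (u : Fin (t * 4 ^ (m + 1))),
        Cmat t v C₁ (m + 2) r (finCongr (vnum_succ v t m).symm
            (Fin.natAdd (2 * vnum v t (m + 1)) (finProdFinEquiv (a, u)))) *
          Bmat t v B₁ (m + 2) (finCongr (vnum_succ v t m).symm
            (Fin.natAdd (2 * vnum v t (m + 1)) (finProdFinEquiv (a, u)))) c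
        = ((if ((r : ℕ) / (t * 2 ^ (m + 1))) % 2 = (a : ℕ) then (1 : ℤ) else 0) *
            (if (a : ℕ) = ((c : ℕ) / 2) / (t * 4 ^ (m + 1)) then (1 : ℤ) else 0)) *
          (Pmat t (m + 1) ⟨(r : ℕ) % (t * 2 ^ (m + 1)), pfr⟩ u *
            Pmat t (m + 1) u ⟨((c : ℕ) / 2) % (t * 4 ^ (m + 1)), pfc⟩) := by
      intro a u
      have hZ : ((finCongr (vnum_succ v t m).symm
          (Fin.natAdd (2 * vnum v t (m + 1)) (finProdFinEquiv (a, u))) :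
            Fin (vnum v t (m + 2))) : ℕ)
          = 2 * vnum v t (m + 1) + ((u : ℕ) + t * 4 ^ (m + 1) * (a : ℕ)) := by
        simp [finProdFinEquiv]
      rw [Cmat_succ_apply t v ht hv C₁ m r _, Bmat_succ_apply t v ht hv B₁ m _ c]
      rw [dif_neg (show ¬ _ < 2 * vnum v t (m + 1) by rw [hZ]; omega),
        dif_neg (show ¬ _ < 2 * vnum v t (m + 1) by rw [hZ]; omega)]
      simp only [hZ]
      have h0 : 2 * vnum v t (m + 1) + ((u : ℕ) + t * 4 ^ (m + 1) * (a : ℕ))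
          - 2 * vnum v t (m + 1) = (u : ℕ) + t * 4 ^ (m + 1) * (a : ℕ) := by omega
      have h1 : ((u : ℕ) + t * 4 ^ (m + 1) * (a : ℕ)) / (t * 4 ^ (m + 1)) = (a : ℕ) := by
        rw [Nat.add_mul_div_left _ _ hNpos, Nat.div_eq_of_lt u.isLt, Nat.zero_add]
      have h2 : ((u : ℕ) + t * 4 ^ (m + 1) * (a : ℕ)) % (t * 4 ^ (m + 1)) = (u : ℕ) := by
        rw [Nat.add_mul_mod_self_left, Nat.mod_eq_of_lt u.isLt]
      have h3 : (a : ℕ) % 2 = (a : ℕ) := Nat.mod_eq_of_lt a.isLt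
      simp only [h0, h1, h2, h3, Fin.eta]
      ring
    have S1 : (∑ i : Fin (2 * vnum v t (m + 1)),
          Cmat t v C₁ (m + 2) r (finCongr (vnum_succ v t m).symm
              (Fin.castAdd (2 * (t * 4 ^ (m + 1))) i)) *
            Bmat t v B₁ (m + 2) (finCongr (vnum_succ v t m).symm
              (Fin.castAdd (2 * (t * 4 ^ (m + 1))) i)) c)
        = ((if ((r : ℕ) / (t * 2 ^ (m + 1))) % 2 = 0 then (1 : ℤ) else 0) *
              (if ((c : ℕ) / 2) / (t * 4 ^ (m + 1)) = 1 then (1 : ℤ) else 0)) *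
            ((t : ℤ) - s * Pmat t (m + 1) ⟨(r : ℕ) % (t * 2 ^ (m + 1)), pfr⟩
              ⟨((c : ℕ) / 2) % (t * 4 ^ (m + 1)), pfc⟩)
          + ((if ((r : ℕ) / (t * 2 ^ (m + 1))) % 2 = 1 then (1 : ℤ) else 0) *
              (if ((c : ℕ) / 2) / (t * 4 ^ (m + 1)) = 0 then (1 : ℤ) else 0)) *
            ((t : ℤ) - s * Pmat t (m + 1) ⟨(r : ℕ) % (t * 2 ^ (m + 1)), pfr⟩
              ⟨((c : ℕ) / 2) % (t * 4 ^ (m + 1)), pfc⟩) := by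
      rw [← Equiv.sum_comp (finProdFinEquiv (m := 2) (n := vnum v t (m + 1)))
        (fun i => Cmat t v C₁ (m + 2) r (finCongr (vnum_succ v t m).symm
            (Fin.castAdd (2 * (t * 4 ^ (m + 1))) i)) *
          Bmat t v B₁ (m + 2) (finCongr (vnum_succ v t m).symm
            (Fin.castAdd (2 * (t * 4 ^ (m + 1))) i)) c)]
      rw [Fintype.sum_prod_type, Fin.sum_univ_two]
      rw [Finset.sum_congr rfl (fun u _ => chunk1 0 u),
        Finset.sum_congr rfl (fun u _ => chunk1 1 u)]
      rw [← Finset.mul_sum, ← Finset.mul_sum, ihe]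
      norm_num
    have S2 : (∑ i : Fin (2 * (t * 4 ^ (m + 1))),
          Cmat t v C₁ (m + 2) r (finCongr (vnum_succ v t m).symm
              (Fin.natAdd (2 * vnum v t (m + 1)) i)) *
            Bmat t v B₁ (m + 2) (finCongr (vnum_succ v t m).symm
              (Fin.natAdd (2 * vnum v t (m + 1)) i)) c)
        = ((if ((r : ℕ) / (t * 2 ^ (m + 1))) % 2 = 0 then (1 : ℤ) else 0) *
              (if 0 = ((c : ℕ) / 2) / (t * 4 ^ (m + 1)) then (1 : ℤ) else 0)) * (t : ℤ)
          + ((if ((r : ℕ) / (t * 2 ^ (m + 1))) % 2 = 1 then (1 : ℤ) else 0) *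
              (if 1 = ((c : ℕ) / 2) / (t * 4 ^ (m + 1)) then (1 : ℤ) else 0)) * (t : ℤ) := by
      rw [← Equiv.sum_comp (finProdFinEquiv (m := 2) (n := t * 4 ^ (m + 1)))
        (fun i => Cmat t v C₁ (m + 2) r (finCongr (vnum_succ v t m).symm
            (Fin.natAdd (2 * vnum v t (m + 1)) i)) *
          Bmat t v B₁ (m + 2) (finCongr (vnum_succ v t m).symm
            (Fin.natAdd (2 * vnum v t (m + 1)) i)) c)]
      rw [Fintype.sum_prod_type, Fin.sum_univ_two]
      rw [Finset.sum_congr rfl (fun u _ => chunk2 0 u),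
        Finset.sum_congr rfl (fun u _ => chunk2 1 u)]
      rw [← Finset.mul_sum, ← Finset.mul_sum,
        sum_P_P t (m + 1) ht ⟨(r : ℕ) % (t * 2 ^ (m + 1)), pfr⟩
          ⟨((c : ℕ) / 2) % (t * 4 ^ (m + 1)), pfc⟩]
      norm_num
    rw [S1, S2]
    rw [Pmat_apply, Pmat_apply]
    simp only [Fin.val_mk]
    have hiff := pent_succ_iff t m (r : ℕ) (c : ℕ) ht r.isLt c.isLt
    have hρ2 : ((r : ℕ) / (t * 2 ^ (m + 1))) % 2 = 0 ∨ ((r : ℕ) / (t * 2 ^ (m + 1))) % 2 = 1 :=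
      Nat.mod_two_eq_zero_or_one _
    have hXc : (c : ℕ) < (t * 4 ^ (m + 1)) * 4 := by
      calc (c : ℕ) < t * 4 ^ (m + 2) := c.isLt
        _ = (t * 4 ^ (m + 1)) * 4 := by ring
    have hγ2 : ((c : ℕ) / 2) / (t * 4 ^ (m + 1)) = 0 ∨ ((c : ℕ) / 2) / (t * 4 ^ (m + 1)) = 1 := by
      have h1 : (c : ℕ) / 2 < (t * 4 ^ (m + 1)) * 2 := Nat.div_lt_of_lt_mul (by omega)
      have h2 : ((c : ℕ) / 2) / (t * 4 ^ (m + 1)) < 2 := Nat.div_lt_of_lt_mul h1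
      rcases Nat.eq_or_lt_of_le (Nat.le_of_lt_succ h2) with h4 | h4
      · exact Or.inr h4
      · exact Or.inl (Nat.lt_one_iff.mp h4)
    rcases hρ2 with h | h <;> rcases hγ2 with h' | h' <;>
      rw [h, h'] at hiff ⊢ <;> norm_num at hiff ⊢ <;> simp [hiff] <;> ring
end

section
/- Define A_2 as the 4×4 block matrix with block rows (A_1, 0, B_1, 0), (0, A_1, 0, B_1), (0, C_1, 0, P_1), (C_1, 0, P_1, 0), a square 0–1 matrix of order 2v+8t. Then A_2² + s·A_2 = t·J_{2v+8t} and A_2·J_{2v+8t} = J_{2v+8t}·A_2 = (k+2t)·J_{2v+8t}; in other words, A_2 is the adjacency matrix of a directed strongly regular graph dsrg(2v+8t, k+2t, t, λ, t). -/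
open Matrix Kronecker

lemma castM_mul {m n p m' n' p' : ℕ} (hm : m = m') (hn : n = n') (hp : p = p')
    (A : Matrix (Fin m) (Fin n) ℤ) (B : Matrix (Fin n) (Fin p) ℤ) :
    castM hm hn A * castM hn hp B = castM hm hp (A * B) := by
  subst hm; subst hn; subst hp; simp [castM]

lemma castM_smul {m n m' n' : ℕ} (hm : m = m') (hn : n = n') (c : ℤ)
    (A : Matrix (Fin m) (Fin n) ℤ) : castM hm hn (c • A) = c • castM hm hn A := rfl

lemma castM_add {m n m' n' : ℕ} (hm : m = m') (hn : n = n')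
    (A B : Matrix (Fin m) (Fin n) ℤ) : castM hm hn (A + B) = castM hm hn A + castM hm hn B := rfl

lemma castM_Jmat {m n m' n' : ℕ} (hm : m = m') (hn : n = n') :
    castM hm hn (Jmat m n) = Jmat m' n' := rfl

lemma castM_inj {m n m' n' : ℕ} (hm : m = m') (hn : n = n')
    {A B : Matrix (Fin m) (Fin n) ℤ} :
    castM hm hn A = castM hm hn B ↔ A = B :=
  (Matrix.reindex (finCongr hm) (finCongr hn)).injective.eq_iff

lemma block2_mul {a b c d e f : ℕ}
    (A : Matrix (Fin a) (Fin c) ℤ) (B : Matrix (Fin a) (Fin d) ℤ)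
    (C : Matrix (Fin b) (Fin c) ℤ) (D : Matrix (Fin b) (Fin d) ℤ)
    (E : Matrix (Fin c) (Fin e) ℤ) (F : Matrix (Fin c) (Fin f) ℤ)
    (G : Matrix (Fin d) (Fin e) ℤ) (H : Matrix (Fin d) (Fin f) ℤ) :
    block2 A B C D * block2 E F G H =
      block2 (A*E + B*G) (A*F + B*H) (C*E + D*G) (C*F + D*H) := by
  unfold block2
  rw [Matrix.reindex_apply, Matrix.reindex_apply, Matrix.reindex_apply,
    Matrix.submatrix_mul_equiv, Matrix.fromBlocks_multiply]

lemma block2_add {a b c d : ℕ}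
    (A A' : Matrix (Fin a) (Fin c) ℤ) (B B' : Matrix (Fin a) (Fin d) ℤ)
    (C C' : Matrix (Fin b) (Fin c) ℤ) (D D' : Matrix (Fin b) (Fin d) ℤ) :
    block2 A B C D + block2 A' B' C' D' = block2 (A+A') (B+B') (C+C') (D+D') := by
  unfold block2
  simp only [Matrix.reindex_apply]
  rw [← Matrix.fromBlocks_add]; rfl

lemma block2_smul {a b c d : ℕ} (r : ℤ)
    (A : Matrix (Fin a) (Fin c) ℤ) (B : Matrix (Fin a) (Fin d) ℤ)
    (C : Matrix (Fin b) (Fin c) ℤ) (D : Matrix (Fin b) (Fin d) ℤ) :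
    r • block2 A B C D = block2 (r•A) (r•B) (r•C) (r•D) := by
  unfold block2
  simp only [Matrix.reindex_apply]
  rw [← Matrix.fromBlocks_smul]; rfl

lemma block2_inj {a b c d : ℕ}
    {A A' : Matrix (Fin a) (Fin c) ℤ} {B B' : Matrix (Fin a) (Fin d) ℤ}
    {C C' : Matrix (Fin b) (Fin c) ℤ} {D D' : Matrix (Fin b) (Fin d) ℤ} :
    block2 A B C D = block2 A' B' C' D' ↔ A = A' ∧ B = B' ∧ C = C' ∧ D = D' := by
  unfold block2
  rw [(Matrix.reindex _ _).injective.eq_iff]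
  constructor
  · intro h
    exact ⟨congrArg Matrix.toBlocks₁₁ h, congrArg Matrix.toBlocks₁₂ h,
      congrArg Matrix.toBlocks₂₁ h, congrArg Matrix.toBlocks₂₂ h⟩
  · rintro ⟨h1, h2, h3, h4⟩; rw [h1, h2, h3, h4]

lemma Jmat_block (a b c d : ℕ) :
    Jmat (a+b) (c+d) = block2 (Jmat a c) (Jmat a d) (Jmat b c) (Jmat b d) := by
  unfold block2
  ext i j
  rw [Matrix.reindex_apply, Matrix.submatrix_apply]
  rcases finSumFinEquiv.symm i with x | x <;> rcases finSumFinEquiv.symm j with y | y <;>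
    simp [Jmat, Matrix.fromBlocks]

lemma rowsum_ext {m n p q : ℕ} (hp : 0 < p) (X : Matrix (Fin m) (Fin n) ℤ) (c : ℤ)
    (h : X * Jmat n p = c • Jmat m p) :
    X * Jmat n q = c • Jmat m q := by
  ext i j
  have h2 := congrFun (congrFun h i) ⟨0, hp⟩
  simp only [Matrix.mul_apply, Jmat, Matrix.smul_apply, Matrix.of_apply, mul_one,
    smul_eq_mul] at h2 ⊢
  exact h2

lemma colsum_ext {m n p q : ℕ} (hp : 0 < p) (X : Matrix (Fin m) (Fin n) ℤ) (c : ℤ)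
    (h : Jmat p m * X = c • Jmat p n) :
    Jmat q m * X = c • Jmat q n := by
  ext i j
  have h2 := congrFun (congrFun h ⟨0, hp⟩) j
  simp only [Matrix.mul_apply, Jmat, Matrix.smul_apply, Matrix.of_apply, one_mul,
    smul_eq_mul] at h2 ⊢
  exact h2

lemma smul_J_cancel {m n : ℕ} (hm : 0 < m) (hn : 0 < n) {c d : ℤ}
    (h : c • Jmat m n = d • Jmat m n) : c = d := by
  have h2 := congrFun (congrFun h ⟨0, hm⟩) ⟨0, hn⟩
  simpa [Jmat] using h2

lemma smul_M_cancel {m n : ℕ} {c : ℤ} (hc : c ≠ 0) {A B : Matrix (Fin m) (Fin n) ℤ}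
    (h : c • A = c • B) : A = B :=
  smul_right_injective _ hc h

/-- Section 2: the block matrix `A₂` is the adjacency matrix of a
`dsrg(2v+8t, k+2t, t, λ, t)`. -/
theorem Atwo_dsrg
    (t lam v k : ℕ) (ht : 0 < t) (hv : 0 < v) (hk : 0 < k)
    (s : ℤ) (hs : s = (t : ℤ) - (lam : ℤ)) (hspos : 0 < s)
    (A₁ : Matrix (Fin v) (Fin v) ℤ)
    (B₁ : Matrix (Fin v) (Fin (4 * t)) ℤ) (C₁ : Matrix (Fin (4 * t)) (Fin v) ℤ)
    (hA01 : ∀ i j, A₁ i j = 0 ∨ A₁ i j = 1)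
    (hB01 : ∀ i j, B₁ i j = 0 ∨ B₁ i j = 1) (hC01 : ∀ i j, C₁ i j = 0 ∨ C₁ i j = 1)
    (hA1 : A₁ * A₁ + s • A₁ = (t : ℤ) • Jmat v v)
    (hA1J : A₁ * Jmat v v = (k : ℤ) • Jmat v v)
    (hJA1 : Jmat v v * A₁ = (k : ℤ) • Jmat v v)
    (hB1C1 : B₁ * C₁ = (t : ℤ) • Jmat v v)
    (hB1P1 : B₁ * Pone t = (t : ℤ) • Jmat v (4 * t))
    (hP1C1 : Pone t * C₁ = (t : ℤ) • Jmat (4 * t) v)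
    (hA1B1 : A₁ * B₁ + s • B₁ = (t : ℤ) • Jmat v (4 * t))
    (hC1A1 : C₁ * A₁ + s • C₁ = (t : ℤ) • Jmat (4 * t) v)
    (hC1B1 : C₁ * B₁ + s • Pone t = (t : ℤ) • Jmat (4 * t) (4 * t))
    (hBJ : B₁ * Jmat (4 * t) (4 * t) = (2 * (t : ℤ)) • Jmat v (4 * t))
    (hJB : Jmat v v * B₁ = (k : ℤ) • Jmat v (4 * t))
    (hCJ : C₁ * Jmat v v = (k : ℤ) • Jmat (4 * t) v)
    (hJC : Jmat (4 * t) (4 * t) * C₁ = (2 * (t : ℤ)) • Jmat (4 * t) v)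
    (A₂ : Matrix (Fin (2 * v + 8 * t)) (Fin (2 * v + 8 * t)) ℤ)
    (hA2 : A₂ = castM (by ring) (by ring)
      (block2 (block2 A₁ 0 0 A₁) (block2 B₁ 0 0 B₁)
        (block2 0 C₁ C₁ 0) (block2 0 (Pone t) (Pone t) 0))) :
    A₂ * A₂ + s • A₂ = (t : ℤ) • Jmat (2 * v + 8 * t) (2 * v + 8 * t) ∧
    A₂ * Jmat (2 * v + 8 * t) (2 * v + 8 * t) =
      ((k : ℤ) + 2 * t) • Jmat (2 * v + 8 * t) (2 * v + 8 * t) ∧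
    Jmat (2 * v + 8 * t) (2 * v + 8 * t) * A₂ =
      ((k : ℤ) + 2 * t) • Jmat (2 * v + 8 * t) (2 * v + 8 * t) := by
  have h4t : 0 < 4*t := by omega
  have ht' : (t:ℤ) ≠ 0 := Int.natCast_ne_zero.mpr ht.ne'
  have hsne : s ≠ 0 := hspos.ne'
  -- normalized product facts
  have hCB : C₁ * B₁ = (t:ℤ) • Jmat (4*t) (4*t) - s • Pone t := by
    rw [← hC1B1]; abel
  have hA1m : A₁ * A₁ = (t:ℤ) • Jmat v v - s • A₁ := by rw [← hA1]; abel
  have hABm : A₁ * B₁ = (t:ℤ) • Jmat v (4*t) - s • B₁ := by rw [← hA1B1]; abel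
  have hCAm : C₁ * A₁ = (t:ℤ) • Jmat (4*t) v - s • C₁ := by rw [← hC1A1]; abel
  -- row/column sum facts for arbitrary widths
  have hAJ : ∀ q, A₁ * Jmat v q = (k:ℤ) • Jmat v q := fun q => rowsum_ext hv _ _ hA1J
  have hJA : ∀ q, Jmat q v * A₁ = (k:ℤ) • Jmat q v := fun q => colsum_ext hv _ _ hJA1
  have hBJ' : ∀ q, B₁ * Jmat (4*t) q = (2*(t:ℤ)) • Jmat v q := fun q => rowsum_ext h4t _ _ hBJ
  have hJB' : ∀ q, Jmat q v * B₁ = (k:ℤ) • Jmat q (4*t) := fun q => colsum_ext hv _ _ hJB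
  have hCJ' : ∀ q, C₁ * Jmat v q = (k:ℤ) • Jmat (4*t) q := fun q => rowsum_ext hv _ _ hCJ
  have hJC' : ∀ q, Jmat q (4*t) * C₁ = (2*(t:ℤ)) • Jmat q v := fun q => colsum_ext h4t _ _ hJC
  -- k = 2t - s
  have hk : (k:ℤ) = 2*t - s := by
    have e1 : (B₁ * C₁) * B₁ = ((t:ℤ)*k) • Jmat v (4*t) := by
      rw [hB1C1, Matrix.smul_mul, hJB, smul_smul]
    have e2 : B₁ * (C₁ * B₁) = ((t:ℤ)*(2*t) - s*t) • Jmat v (4*t) := by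
      rw [hCB, Matrix.mul_sub, Matrix.mul_smul, hBJ, Matrix.mul_smul, hB1P1,
        smul_smul, smul_smul, ← sub_smul]
    have e3 : ((t:ℤ)*k) = (t:ℤ)*(2*t) - s*t :=
      smul_J_cancel hv h4t (by rw [← e1, Matrix.mul_assoc, e2])
    have e4 : (t:ℤ)*k = t*(2*t - s) := by rw [e3]; ring
    exact mul_left_cancel₀ ht' e4
  -- Pone row sums
  have hPJv : Pone t * Jmat (4*t) v = (2*(t:ℤ)) • Jmat (4*t) v := by
    apply smul_M_cancel ht'
    have e1 : Pone t * (C₁ * A₁ + s • C₁) = ((t:ℤ)*k + s*t) • Jmat (4*t) v := by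
      rw [Matrix.mul_add, ← Matrix.mul_assoc, hP1C1, Matrix.smul_mul, hJA (4*t),
        Matrix.mul_smul, hP1C1, smul_smul, smul_smul, ← add_smul]
    have e2 : Pone t * (C₁ * A₁ + s • C₁) = (t:ℤ) • (Pone t * Jmat (4*t) v) := by
      rw [hC1A1, Matrix.mul_smul]
    have h3 : (t:ℤ)*k + s*t = t*(2*t) := by rw [hk]; ring
    rw [← e2, e1, smul_smul, h3]
  -- Pone column sums
  have hJvP : Jmat v (4*t) * Pone t = (2*(t:ℤ)) • Jmat v (4*t) := by
    apply smul_M_cancel ht'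
    have e1 : (A₁ * B₁ + s • B₁) * Pone t = ((t:ℤ)*k + s*t) • Jmat v (4*t) := by
      rw [Matrix.add_mul, Matrix.mul_assoc, hB1P1, Matrix.mul_smul, hAJ (4*t),
        Matrix.smul_mul, hB1P1, smul_smul, smul_smul, ← add_smul]
    have e2 : (A₁ * B₁ + s • B₁) * Pone t = (t:ℤ) • (Jmat v (4*t) * Pone t) := by
      rw [hA1B1, Matrix.smul_mul]
    have h3 : (t:ℤ)*k + s*t = t*(2*t) := by rw [hk]; ring
    rw [← e2, e1, smul_smul, h3]
  have hPJ : ∀ q, Pone t * Jmat (4*t) q = (2*(t:ℤ)) • Jmat (4*t) q :=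
    fun q => rowsum_ext hv _ _ hPJv
  have hJP : ∀ q, Jmat q (4*t) * Pone t = (2*(t:ℤ)) • Jmat q (4*t) :=
    fun q => colsum_ext hv _ _ hJvP
  -- Pone * Pone = t J
  have hPP : Pone t * Pone t = (t:ℤ) • Jmat (4*t) (4*t) := by
    apply smul_M_cancel hsne
    have e1 : Pone t * (C₁ * B₁) = ((t:ℤ)*k) • Jmat (4*t) (4*t) := by
      rw [← Matrix.mul_assoc, hP1C1, Matrix.smul_mul, hJB' (4*t), smul_smul]
    have e2 : Pone t * (C₁ * B₁) =
        ((t:ℤ)*(2*t)) • Jmat (4*t) (4*t) - s • (Pone t * Pone t) := by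
      rw [hCB, Matrix.mul_sub, Matrix.mul_smul, hPJ (4*t), Matrix.mul_smul,
        smul_smul]
    have e3 : ((t:ℤ)*(2*t)) • Jmat (4*t) (4*t) - s • (Pone t * Pone t) =
        ((t:ℤ)*k) • Jmat (4*t) (4*t) := e2.symm.trans e1
    have e4 : s • (Pone t * Pone t) =
        ((t:ℤ)*(2*t)) • Jmat (4*t) (4*t) - ((t:ℤ)*k) • Jmat (4*t) (4*t) := by
      rw [← e3]; abel
    rw [e4, ← sub_smul, smul_smul,
      show (t:ℤ)*(2*t) - (t:ℤ)*k = s*t by rw [hk]; ring]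
  refine ⟨?_, ?_, ?_⟩
  · rw [hA2, castM_mul,
      show Jmat (2*v+8*t) (2*v+8*t) = castM (by ring : (v+v)+(4*t+4*t) = 2*v+8*t)
        (by ring : (v+v)+(4*t+4*t) = 2*v+8*t)
        (Jmat ((v+v)+(4*t+4*t)) ((v+v)+(4*t+4*t))) from rfl,
      ← castM_smul, ← castM_smul, ← castM_add, castM_inj]
    simp only [Jmat_block, block2_mul, block2_add, block2_smul, smul_zero,
      Matrix.mul_zero, Matrix.zero_mul, add_zero, zero_add, block2_inj,
      hA1m, hABm, hCAm, hCB, hB1C1, hB1P1, hP1C1, hPP, sub_add_cancel, and_self, and_true,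
      true_and]
  · rw [hA2,
      show Jmat (2*v+8*t) (2*v+8*t) = castM (by ring : (v+v)+(4*t+4*t) = 2*v+8*t)
        (by ring : (v+v)+(4*t+4*t) = 2*v+8*t)
        (Jmat ((v+v)+(4*t+4*t)) ((v+v)+(4*t+4*t))) from rfl,
      castM_mul, ← castM_smul, castM_inj]
    simp only [Jmat_block, block2_mul, block2_smul, Matrix.mul_zero, Matrix.zero_mul,
      add_zero, zero_add, block2_add, block2_inj, hAJ, hBJ', hCJ', hPJ, add_smul, and_self,
      and_true, true_and]
  · rw [hA2,
      show Jmat (2*v+8*t) (2*v+8*t) = castM (by ring : (v+v)+(4*t+4*t) = 2*v+8*t)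
        (by ring : (v+v)+(4*t+4*t) = 2*v+8*t)
        (Jmat ((v+v)+(4*t+4*t)) ((v+v)+(4*t+4*t))) from rfl,
      castM_mul, ← castM_smul, castM_inj]
    simp only [Jmat_block, block2_mul, block2_smul, Matrix.mul_zero, Matrix.zero_mul,
      add_zero, zero_add, block2_add, block2_inj, hJA, hJB', hJC', hJP, add_smul, and_self,
      and_true, true_and]
end
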